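/- Inverse-ordering path cancellation for bilinear models: let m : Fin n → Fin n → ℝ and f(x) = ∑_{j} ∑_{k} m_{jk}·x_j·x_k. For a permutation σ of Fin n, feature i, and points a, b ∈ ℝⁿ, define the marginal contribution of i under σ as M_i(σ) = f(patch(b,a,Pre_σ(i) ∪ {i})) − f(patch(b,a,Pre_σ(i))), where Pre_σ(i) = { j : σ⁻¹(j) < σ⁻¹(i) } and patch(b,a,S) has j-th coordinate b_j for j ∈ S and a_j otherwise. Let σ̄ be the reversed ordering of σ (so Pre_{σ̄}(i) = { j : σ⁻¹(j) > σ⁻¹(i) }). Then for every σ and every i, M_i(σ) + M_i(σ̄) = 2·IG_i(f,a,b). -/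

import Mathlib

def patch {n : ℕ} (x r : Fin n → ℝ) (S : Finset (Fin n)) : Fin n → ℝ :=
  fun j => if j ∈ S then x j else r j

noncomputable def IG {n : ℕ} (f : (Fin n → ℝ) → ℝ) (a b : Fin n → ℝ) (i : Fin n) : ℝ :=
  (b i - a i) * ∫ t in (0:ℝ)..1, fderiv ℝ f (fun j => a j + t * (b j - a j)) (Pi.single i 1)

/-- Features strictly preceding `i` in the ordering `σ`. -/
def pre {n : ℕ} (σ : Equiv.Perm (Fin n)) (i : Fin n) : Finset (Fin n) :=
  Finset.univ.filter (fun j => σ.symm j < σ.symm i)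

/-- Features strictly preceding `i` in the reversed ordering of `σ`. -/
def preRev {n : ℕ} (σ : Equiv.Perm (Fin n)) (i : Fin n) : Finset (Fin n) :=
  Finset.univ.filter (fun j => σ.symm i < σ.symm j)


lemma fderiv_quad {n : ℕ} (m : Fin n → Fin n → ℝ) (i : Fin n) (p : Fin n → ℝ) :
    fderiv ℝ (fun x : Fin n → ℝ => ∑ j, ∑ k, m j k * x j * x k) p (Pi.single i 1)
      = ∑ j, (m i j + m j i) * p j := by
  have h : HasFDerivAt (fun x : Fin n → ℝ => ∑ j, ∑ k, m j k * x j * x k)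
      (∑ j, ∑ k, m j k • (p j • (ContinuousLinearMap.proj k : (Fin n → ℝ) →L[ℝ] ℝ)
        + p k • (ContinuousLinearMap.proj j : (Fin n → ℝ) →L[ℝ] ℝ))) p := by
    apply HasFDerivAt.fun_sum
    intro j _
    apply HasFDerivAt.fun_sum
    intro k _
    have hj := hasFDerivAt_apply (𝕜 := ℝ) j p
    have hk := hasFDerivAt_apply (𝕜 := ℝ) k p
    simpa [mul_assoc] using (hj.mul hk).const_mul (m j k)
  rw [h.fderiv]
  simp [ContinuousLinearMap.sum_apply, Pi.single_apply, mul_ite, Finset.sum_add_distrib,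
    Finset.sum_ite_eq', Finset.sum_ite_eq, add_mul, mul_comm]
  rw [← Finset.sum_add_distrib]
  exact Finset.sum_congr rfl fun j _ => by ring

lemma integral_lin (A B : ℝ) : ∫ t in (0:ℝ)..1, (A + t * B) = A + B / 2 := by
  rw [intervalIntegral.integral_add intervalIntegrable_const
    (Continuous.intervalIntegrable (by fun_prop) 0 1)]
  simp [intervalIntegral.integral_mul_const, integral_id]
  ring

lemma integral_sum {n : ℕ} (c a b : Fin n → ℝ) :
    (∫ t in (0:ℝ)..1, ∑ j, c j * (a j + t * (b j - a j)))
      = ∑ j, c j * ((a j + b j) / 2) := by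
  rw [intervalIntegral.integral_finset_sum]
  · refine Finset.sum_congr rfl fun j _ => ?_
    have : (fun t : ℝ => c j * (a j + t * (b j - a j)))
        = fun t => c j * a j + t * (c j * (b j - a j)) := by funext t; ring
    rw [this, integral_lin]
    ring
  · intro j _
    exact Continuous.intervalIntegrable (by fun_prop) 0 1

lemma decomp {n : ℕ} (m : Fin n → Fin n → ℝ) (i : Fin n) (w : Fin n → ℝ) :
    (∑ j, ∑ k, m j k * w j * w k)
      = m i i * w i * w i
        + (∑ k ∈ Finset.univ.erase i, (m i k + m k i) * w k) * w i
        + ∑ j ∈ Finset.univ.erase i, ∑ k ∈ Finset.univ.erase i, m j k * w j * w k := by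
  rw [← Finset.add_sum_erase _ _ (Finset.mem_univ i)]
  rw [← Finset.add_sum_erase _ (fun k => m i k * w i * w k) (Finset.mem_univ i)]
  have : ∀ j ∈ Finset.univ.erase i, (∑ k, m j k * w j * w k)
      = m j i * w j * w i + ∑ k ∈ Finset.univ.erase i, m j k * w j * w k := fun j _ => by
    rw [← Finset.add_sum_erase _ _ (Finset.mem_univ i)]
  rw [Finset.sum_congr rfl this, Finset.sum_add_distrib]
  have key : (∑ k ∈ Finset.univ.erase i, (m i k + m k i) * w k) * w i
      = (∑ k ∈ Finset.univ.erase i, m i k * w i * w k)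
        + ∑ k ∈ Finset.univ.erase i, m k i * w k * w i := by
    rw [Finset.sum_mul, ← Finset.sum_add_distrib]
    exact Finset.sum_congr rfl fun k _ => by ring
  rw [key]
  ring

lemma diff_lemma {n : ℕ} (m : Fin n → Fin n → ℝ) (i : Fin n) (y z : Fin n → ℝ)
    (h : ∀ j, j ≠ i → y j = z j) :
    (∑ j, ∑ k, m j k * y j * y k) - (∑ j, ∑ k, m j k * z j * z k)
      = (y i - z i) * (m i i * (y i + z i)
          + ∑ j ∈ Finset.univ.erase i, (m i j + m j i) * y j) := by
  rw [decomp m i y, decomp m i z]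
  have h1 : ∀ j ∈ Finset.univ.erase i, (m i j + m j i) * z j = (m i j + m j i) * y j :=
    fun j hj => by rw [h j (Finset.ne_of_mem_erase hj)]
  have h2 : (∑ j ∈ Finset.univ.erase i, ∑ k ∈ Finset.univ.erase i, m j k * z j * z k)
      = ∑ j ∈ Finset.univ.erase i, ∑ k ∈ Finset.univ.erase i, m j k * y j * y k := by
    refine Finset.sum_congr rfl fun j hj => Finset.sum_congr rfl fun k hk => by
      rw [h j (Finset.ne_of_mem_erase hj), h k (Finset.ne_of_mem_erase hk)]
  rw [Finset.sum_congr rfl h1, h2]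
  ring

theorem inverse_ordering_cancellation (n : ℕ) (m : Fin n → Fin n → ℝ)
    (f : (Fin n → ℝ) → ℝ)
    (hf : f = fun x => ∑ j, ∑ k, m j k * x j * x k)
    (a b : Fin n → ℝ) (σ : Equiv.Perm (Fin n)) (i : Fin n) :
    (f (patch b a (insert i (pre σ i))) - f (patch b a (pre σ i))) +
      (f (patch b a (insert i (preRev σ i))) - f (patch b a (preRev σ i)))
      = 2 * IG f a b i := by
  subst hf
  -- RHS computation
  have hint : (∫ t in (0:ℝ)..1,
      fderiv ℝ (fun x : Fin n → ℝ => ∑ j, ∑ k, m j k * x j * x k)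
        (fun j => a j + t * (b j - a j)) (Pi.single i 1))
      = ∑ j, (m i j + m j i) * ((a j + b j) / 2) := by
    rw [intervalIntegral.integral_congr (fun t _ => fderiv_quad m i _)]
    exact integral_sum _ a b
  have hRHS : IG (fun x : Fin n → ℝ => ∑ j, ∑ k, m j k * x j * x k) a b i
      = (b i - a i) * ((m i i + m i i) * ((a i + b i) / 2)
          + ∑ j ∈ Finset.univ.erase i, (m i j + m j i) * ((a j + b j) / 2)) := by
    rw [IG, hint, ← Finset.add_sum_erase _ _ (Finset.mem_univ i)]
  -- LHS: apply diff_lemma to both orderings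
  have key : ∀ S : Finset (Fin n), i ∉ S →
      (∑ j, ∑ k, m j k * (patch b a (insert i S)) j * (patch b a (insert i S)) k)
        - (∑ j, ∑ k, m j k * (patch b a S) j * (patch b a S) k)
      = (b i - a i) * (m i i * (b i + a i)
          + ∑ j ∈ Finset.univ.erase i, (m i j + m j i) * (patch b a S) j) := by
    intro S hiS
    have h1 := diff_lemma m i (patch b a (insert i S)) (patch b a S)
      (fun j hj => by simp [patch, Finset.mem_insert, hj])
    have h2 : (patch b a (insert i S)) i = b i := by simp [patch]
    have h3 : (patch b a S) i = a i := by simp [patch, hiS]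
    rw [h1, h2, h3]
    congr 2
    exact Finset.sum_congr rfl fun j hj => by
      simp [patch, Finset.mem_insert, Finset.ne_of_mem_erase hj]
  have hiS : i ∉ pre σ i := by simp [pre]
  have hiS' : i ∉ preRev σ i := by simp [preRev]
  rw [key _ hiS, key _ hiS', hRHS]
  have hsum : (∑ j ∈ Finset.univ.erase i, (m i j + m j i) * (patch b a (pre σ i)) j)
      + (∑ j ∈ Finset.univ.erase i, (m i j + m j i) * (patch b a (preRev σ i)) j)
      = ∑ j ∈ Finset.univ.erase i, (m i j + m j i) * (a j + b j) := by
    rw [← Finset.sum_add_distrib]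
    refine Finset.sum_congr rfl fun j hj => ?_
    have hji : j ≠ i := Finset.ne_of_mem_erase hj
    have hne : σ.symm j ≠ σ.symm i := fun h => hji (σ.symm.injective h)
    rcases hne.lt_or_gt with h | h
    · have : ¬ σ.symm i < σ.symm j := not_lt.2 h.le
      simp [patch, pre, preRev, h, this]
      ring
    · have : ¬ σ.symm j < σ.symm i := not_lt.2 h.le
      simp [patch, pre, preRev, h, this]
      ring
  have hhalf : (∑ j ∈ Finset.univ.erase i, (m i j + m j i) * ((a j + b j) / 2))
      = (∑ j ∈ Finset.univ.erase i, (m i j + m j i) * (a j + b j)) / 2 := by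
    rw [Finset.sum_div]
    exact Finset.sum_congr rfl fun j _ => by ring
  rw [hhalf]
  linear_combination (b i - a i) * hsum
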